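/- For every integer n ≥ 6, there is a unique real number r_n with 2^{−n} < r_n < 2^{−n} + 2n·4^{−n} and g_n(2 − 2r_n) = 0, and moreover r_n / κ_n → 1 as n → ∞ (that is, r_n is asymptotically equivalent to κ_n). -/

import Mathlib

open Polynomial Filter Topology

private lemma ten_mul_le_pow {n : ℕ} (hn : 6 ≤ n) : (10 : ℝ) * n ≤ 2 ^ n := by
  have key : ∀ m : ℕ, 10 * (m + 6) ≤ 2 ^ (m + 6) := by
    intro m
    induction m with
    | zero => norm_num
    | succ k ih =>
      have h2 : (10:ℕ) ≤ 2 ^ (k + 6) := le_trans (by omega : (10:ℕ) ≤ 10 * (k + 6)) ih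
      calc 10 * (k + 1 + 6) = 10 * (k + 6) + 10 := by ring
      _ ≤ 2 ^ (k + 6) + 2 ^ (k + 6) := by omega
      _ = 2 ^ (k + 1 + 6) := by ring
  obtain ⟨m, rfl⟩ : ∃ m, n = m + 6 := ⟨n - 6, by omega⟩
  have := key m
  calc (10 : ℝ) * (m + 6 : ℕ) = ((10 * (m + 6) : ℕ) : ℝ) := by push_cast; ring
  _ ≤ ((2 ^ (m + 6) : ℕ) : ℝ) := by exact_mod_cast this
  _ = 2 ^ (m + 6 : ℕ) := by push_cast; ring

private lemma pow_sub_pow_le' (n : ℕ) {a b : ℝ} (hb : 0 ≤ b) (hba : b ≤ a) :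
    a ^ (n + 1) - b ^ (n + 1) ≤ (n + 1 : ℝ) * a ^ n * (a - b) := by
  induction n with
  | zero => simp
  | succ m ih =>
    have ha : 0 ≤ a := hb.trans hba
    have hpow : b ^ (m + 1) ≤ a ^ (m + 1) := pow_le_pow_left₀ hb hba _
    have hb' : 0 ≤ b ^ (m + 1) := pow_nonneg hb _
    have : a ^ (m + 2) - b ^ (m + 2) = a * (a ^ (m + 1) - b ^ (m + 1)) + b ^ (m + 1) * (a - b) := by
      ring
    rw [this]
    have h1 : a * (a ^ (m + 1) - b ^ (m + 1)) ≤ a * ((m + 1 : ℝ) * a ^ m * (a - b)) :=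
      mul_le_mul_of_nonneg_left ih ha
    have h2 : b ^ (m + 1) * (a - b) ≤ a ^ (m + 1) * (a - b) :=
      mul_le_mul_of_nonneg_right hpow (by linarith)
    have : a * ((m + 1 : ℝ) * a ^ m * (a - b)) = (m + 1 : ℝ) * a ^ (m + 1) * (a - b) := by ring
    push_cast
    nlinarith [h1, h2]

private lemma eval_g_iff (n : ℕ) (r : ℝ) :
    Polynomial.eval (2 - 2*r) (X ^ (n + 1) - C 2 * X ^ n + C 2 : ℝ[X]) = 0 ↔
      r * (2 - 2*r) ^ n = 1 := by
  have h : Polynomial.eval (2 - 2*r) (X ^ (n + 1) - C 2 * X ^ n + C 2 : ℝ[X])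
      = 2 - 2 * (r * (2 - 2*r) ^ n) := by
    simp [pow_succ]
    ring
  rw [h]
  constructor <;> intro h' <;> linarith

private lemma key_facts {n : ℕ} (hn : 6 ≤ n) :
    ∃! r : ℝ, (1/2^n < r ∧ r < 1/2^n + 2*n/4^n) ∧ r * (2 - 2*r) ^ n = 1 := by
  set a : ℝ := 1/2^n with ha_def
  set b : ℝ := 1/2^n + 2*n/4^n with hb_def
  have h2n : (0:ℝ) < 2 ^ n := by positivity
  have h4n : (0:ℝ) < 4 ^ n := by positivity
  have hnpos : (0:ℝ) < n := by exact_mod_cast (by omega : 0 < n)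
  have hu : (n:ℝ)/2^n ≤ 1/10 := by
    rw [div_le_div_iff₀ h2n (by norm_num)]
    linarith [ten_mul_le_pow hn]
  have hupos : (0:ℝ) < (n:ℝ)/2^n := by positivity
  have hab : a < b := by
    have : (0:ℝ) < 2*n/4^n := by positivity
    simp [ha_def, hb_def]; linarith
  -- b * 2^n = 1 + 2*(n/2^n)
  have h4eq : (4:ℝ)^n = 2^n * 2^n := by
    rw [show (4:ℝ) = 2*2 by norm_num, mul_pow]
  have hb2n : b * 2^n = 1 + 2*((n:ℝ)/2^n) := by
    rw [hb_def, h4eq]; field_simp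
  have ha2n : a * 2^n = 1 := by rw [ha_def, one_div, inv_mul_cancel₀ h2n.ne']
  have ha_pos : 0 < a := by positivity
  have hb_small : b < 1/((n:ℝ)+1) := by
    have hb_le : b * 2^n ≤ 12/10 := by rw [hb2n]; linarith
    have hn1 : (1:ℝ) ≤ n := by exact_mod_cast (by omega : 1 ≤ n)
    rw [lt_div_iff₀ (by positivity)]
    have h3 : b * (((n:ℝ)+1) * 2^n) < 2^n := by
      calc b * (((n:ℝ)+1) * 2^n) = (b * 2^n) * ((n:ℝ)+1) := by ring
      _ ≤ 12/10 * ((n:ℝ)+1) := mul_le_mul_of_nonneg_right hb_le (by positivity)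
      _ < 2^n := by nlinarith [ten_mul_le_pow hn]
    nlinarith [h3, h2n]
  have hb_lt_one : b < 1 := lt_of_lt_of_le hb_small (by
    rw [div_le_one (by positivity)]; linarith)
  set h : ℝ → ℝ := fun r => r * (2 - 2*r) ^ n with hh_def
  have hcont : Continuous h := by continuity
  -- strict mono on Icc a b
  have hmono : StrictMonoOn h (Set.Icc a b) := by
    apply strictMonoOn_of_deriv_pos (convex_Icc a b) hcont.continuousOn
    intro x hx
    rw [interior_Icc] at hx
    obtain ⟨hx1, hx2⟩ := hx
    obtain ⟨m, rfl⟩ : ∃ m, n = m + 1 := ⟨n - 1, by omega⟩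
    have hx_pos : 0 < x := ha_pos.trans hx1
    have hx_small : x < 1/((m:ℝ)+1+1) := by
      refine hx2.trans_le (le_of_lt ?_)
      rw [show ((m:ℝ)+1+1) = ((m+1:ℕ):ℝ)+1 by simp]
      exact hb_small
    have hx_lt_one : x < 1 := hx_small.trans_le (by
      rw [div_le_one (by positivity)]; linarith [Nat.cast_nonneg (α := ℝ) m])
    have hd : HasDerivAt h ((2 - 2*x) ^ (m+1) + x * (((m:ℝ)+1) * (2 - 2*x) ^ m * (-2))) x := by
      have h1 : HasDerivAt (fun r : ℝ => 2 - 2*r) (-2) x := by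
        simpa using ((hasDerivAt_id x).const_mul 2).const_sub 2
      have h2 := h1.pow (m+1)
      have h3 := (hasDerivAt_id x).mul h2
      refine h3.congr_deriv ?_
      simp only [Nat.add_sub_cancel, id_eq, Pi.pow_apply]
      push_cast
      ring
    rw [hd.deriv]
    have hfac : (2 - 2*x) ^ (m+1) + x * (((m:ℝ)+1) * (2 - 2*x) ^ m * (-2))
        = (2 - 2*x) ^ m * (2 - 2*((m:ℝ)+1+1)*x) := by
      rw [pow_succ]
      ring
    rw [hfac]
    have hpos1 : (0:ℝ) < (2 - 2*x) ^ m := pow_pos (by linarith) m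
    have hpos2 : (0:ℝ) < 2 - 2*((m:ℝ)+1+1)*x := by
      have := (lt_div_iff₀ (by positivity)).mp hx_small
      linarith
    exact mul_pos hpos1 hpos2
  have hha : h a < 1 := by
    have : h a = (1 - a) ^ n := by
      have : (2 - 2*a) ^ n = 2^n * (1-a)^n := by
        rw [← mul_pow]; ring_nf
      simp only [hh_def, this]
      calc a * (2^n * (1-a)^n) = (a * 2^n) * (1-a)^n := by ring
      _ = (1-a)^n := by rw [ha2n]; ring
    rw [this]
    apply pow_lt_one₀ (by linarith [lt_trans ha_pos hab, hb_lt_one]) (by linarith) (by omega)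
  have hhb : 1 < h b := by
    have hbval : h b = (1 + 2*((n:ℝ)/2^n)) * (1-b)^n := by
      have h1 : (2 - 2*b) ^ n = 2^n * (1-b)^n := by
        rw [← mul_pow]; ring_nf
      simp only [hh_def, h1]
      calc b * (2^n * (1-b)^n) = (b * 2^n) * (1-b)^n := by ring
      _ = (1 + 2*((n:ℝ)/2^n)) * (1-b)^n := by rw [hb2n]
    rw [hbval]
    have hbern : 1 + (n:ℝ) * (-b) ≤ (1 + (-b))^n := one_add_mul_le_pow (by linarith [ha_pos, hab]) n
    have hnb : (n:ℝ) * b = (n:ℝ)/2^n + 2*((n:ℝ)/2^n)^2 := by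
      rw [hb_def, h4eq]; field_simp
    set u : ℝ := (n:ℝ)/2^n with hu_def
    have key : (1 : ℝ) < (1 + 2*u) * (1 - (u + 2*u^2)) := by nlinarith [hupos, hu]
    have h1b : (1 : ℝ) + (n:ℝ)*(-b) = 1 - (u + 2*u^2) := by rw [← hnb]; ring
    calc (1:ℝ) < (1 + 2*u) * (1 - (u + 2*u^2)) := key
    _ = (1 + 2*u) * (1 + (n:ℝ)*(-b)) := by rw [h1b]
    _ ≤ (1 + 2*u) * (1 + (-b))^n := by
        apply mul_le_mul_of_nonneg_left hbern (by linarith [hupos])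
    _ = (1 + 2*u) * (1-b)^n := by ring_nf
  -- existence by IVT
  have hivt := intermediate_value_Ioo (le_of_lt hab) hcont.continuousOn (a := a) (b := b)
  have h1mem : (1:ℝ) ∈ Set.Ioo (h a) (h b) := ⟨hha, hhb⟩
  obtain ⟨r, hrmem, hr1⟩ := hivt h1mem
  refine ⟨r, ⟨⟨hrmem.1, hrmem.2⟩, hr1⟩, ?_⟩
  intro r' ⟨⟨hr'1, hr'2⟩, hr'eq⟩
  refine hmono.injOn (Set.mem_Icc_of_Ioo ⟨hr'1, hr'2⟩) (Set.mem_Icc_of_Ioo hrmem) ?_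
  show r' * (2 - 2*r') ^ n = r * (2 - 2*r) ^ n
  rw [hr'eq]
  exact hr1.symm


private lemma kappa_tendsto (κ : ℕ → ℝ)
    (hκ : ∀ n : ℕ, 1 ≤ n → κ n ∈ Set.Ioo (0 : ℝ) (1/2) ∧ (2 + 2*κ n)^n * κ n = 1) :
    Filter.Tendsto (fun n : ℕ => κ n * 2^n) Filter.atTop (𝓝 1) := by
  have t34 : Filter.Tendsto (fun n : ℕ => (n:ℝ) * (3/4:ℝ)^n) Filter.atTop (𝓝 0) :=
    tendsto_self_mul_const_pow_of_lt_one (by norm_num) (by norm_num)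
  have hlow : Filter.Tendsto (fun n : ℕ => 1 - (n:ℝ) * (3/4:ℝ)^n) Filter.atTop (𝓝 1) := by
    simpa using (tendsto_const_nhds (x := (1:ℝ)) (f := Filter.atTop)).sub t34
  apply tendsto_of_tendsto_of_tendsto_of_le_of_le' hlow tendsto_const_nhds
  · -- lower bound
    filter_upwards [Filter.eventually_ge_atTop 1] with n hn
    obtain ⟨⟨hκ0, hκh⟩, hκeq⟩ := hκ n hn
    obtain ⟨m, rfl⟩ : ∃ m, n = m + 1 := ⟨n - 1, by omega⟩
    set n := m + 1 with hn_def
    have h2n : (0:ℝ) < 2^n := by positivity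
    have hκ2 : κ n * 2 ^ n ≤ 1 := by
      have hp : (2:ℝ)^n ≤ (2+2*κ n)^n := pow_le_pow_left₀ (by norm_num) (by linarith) n
      nlinarith [hκ0, hp, hκeq]
    have hκle : κ n ≤ 1/2^n := (le_div_iff₀ h2n).mpr hκ2
    set c : ℝ := 1/2^n with hc_def
    have hc : (0:ℝ) < c := by positivity
    have h3m : (2+2*κ n)^m ≤ 3^m := pow_le_pow_left₀ (by linarith) (by linarith) m
    have hdiff := pow_sub_pow_le' m (show (0:ℝ) ≤ 2 by norm_num)
      (show (2:ℝ) ≤ 2+2*κ n by linarith)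
    have step1 : (2+2*κ n)^(m+1) - 2^(m+1) ≤ ((m:ℝ)+1) * 3^m * (2*κ n) := by
      refine hdiff.trans ?_
      have e : ((m:ℝ)+1) * (2+2*κ n)^m * ((2+2*κ n) - 2)
          = ((m:ℝ)+1) * (2+2*κ n)^m * (2*κ n) := by ring
      rw [e]
      exact mul_le_mul_of_nonneg_right
        (mul_le_mul_of_nonneg_left h3m (by positivity)) (by positivity)
    have e1 : 1 - κ n * 2^n = κ n * ((2+2*κ n)^n - 2^n) := by linear_combination (-1) * hκeq
    have main : κ n * ((2+2*κ n)^n - 2^n) ≤ (n:ℝ) * (3/4:ℝ)^n := by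
      have e34 : ((3:ℝ)/4)^n = (3*3^m) * (c*c) := by
        rw [div_pow, hc_def, show (4:ℝ)^n = 2^n*2^n from by
          rw [show (4:ℝ) = 2*2 by norm_num, mul_pow],
          show (3:ℝ)^n = 3*3^m from by rw [pow_succ]; ring]
        field_simp
      have hncast : ((n:ℕ):ℝ) = (m:ℝ)+1 := by rw [hn_def, Nat.cast_succ]
      calc κ n * ((2+2*κ n)^n - 2^n)
          ≤ κ n * (((m:ℝ)+1)*3^m*(2*κ n)) := mul_le_mul_of_nonneg_left step1 hκ0.le
        _ = 2*((m:ℝ)+1)*3^m*(κ n * κ n) := by ring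
        _ ≤ 2*((m:ℝ)+1)*3^m*(c*c) := by
            exact mul_le_mul_of_nonneg_left
              (mul_le_mul hκle hκle hκ0.le hc.le) (by positivity)
        _ ≤ ((m:ℝ)+1)*((3*3^m)*(c*c)) := by
            have hnn : (0:ℝ) ≤ ((m:ℝ)+1) * 3^m * (c*c) := by positivity
            nlinarith [hnn]
        _ = (n:ℝ) * (3/4:ℝ)^n := by rw [e34, hncast]
    linarith [e1, main]
  · -- upper bound
    filter_upwards [Filter.eventually_ge_atTop 1] with n hn
    obtain ⟨⟨hκ0, hκh⟩, hκeq⟩ := hκ n hn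
    have hp : (2:ℝ)^n ≤ (2+2*κ n)^n := pow_le_pow_left₀ (by norm_num) (by linarith) n
    nlinarith [hκ0, hp, hκeq]

/-- For `n ≥ 6`, there is a unique real `r_n` with `2^{-n} < r_n < 2^{-n} + 2n·4^{-n}`
and `g_n(2 - 2r_n) = 0`; moreover `r_n / κ_n → 1`, where `κ_n` is the unique
`κ ∈ (0,1/2)` with `(2+2κ)^n κ = 1`. -/
theorem g_root_unique_and_asymptotic (κ : ℕ → ℝ)
    (hκ : ∀ n : ℕ, 1 ≤ n → κ n ∈ Set.Ioo (0 : ℝ) (1/2) ∧ (2 + 2*κ n)^n * κ n = 1) :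
    (∀ n : ℕ, 6 ≤ n → ∃! r : ℝ,
      (1/2^n < r ∧ r < 1/2^n + 2*n/4^n) ∧
      Polynomial.eval (2 - 2*r) (X ^ (n + 1) - C 2 * X ^ n + C 2 : ℝ[X]) = 0) ∧
    (∀ r : ℕ → ℝ,
      (∀ n : ℕ, 6 ≤ n →
        (1/2^n < r n ∧ r n < 1/2^n + 2*n/4^n) ∧
        Polynomial.eval (2 - 2*r n) (X ^ (n + 1) - C 2 * X ^ n + C 2 : ℝ[X]) = 0) →
      Tendsto (fun n : ℕ => r n / κ n) atTop (𝓝 1)) := by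
  constructor
  · intro n hn
    simp only [eval_g_iff]
    exact key_facts hn
  · intro r hr
    have t0 : Tendsto (fun n : ℕ => (n:ℝ) * (1/2:ℝ)^n) atTop (𝓝 0) :=
      tendsto_self_mul_const_pow_of_lt_one (by norm_num) (by norm_num)
    have t1 : Tendsto (fun n : ℕ => r n * 2^n) atTop (𝓝 1) := by
      have hup : Tendsto (fun n : ℕ => 1 + 2 * ((n:ℝ) * (1/2:ℝ)^n)) atTop (𝓝 1) := by
        simpa using (tendsto_const_nhds (x := (1:ℝ)) (f := atTop)).add (t0.const_mul 2)
      apply tendsto_of_tendsto_of_tendsto_of_le_of_le' tendsto_const_nhds hup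
      · filter_upwards [eventually_ge_atTop 6] with n hn
        obtain ⟨⟨hlo, _⟩, _⟩ := hr n hn
        have h2n : (0:ℝ) < 2^n := by positivity
        have := (div_lt_iff₀ h2n).mp hlo
        linarith
      · filter_upwards [eventually_ge_atTop 6] with n hn
        obtain ⟨⟨_, hhi⟩, _⟩ := hr n hn
        have h2n : (0:ℝ) < 2^n := by positivity
        have h4eq : (4:ℝ)^n = 2^n * 2^n := by
          rw [show (4:ℝ) = 2*2 by norm_num, mul_pow]
        have e : (1/2^n + 2*(n:ℝ)/4^n) * 2^n = 1 + 2 * ((n:ℝ) * (1/2:ℝ)^n) := by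
          rw [div_pow, one_pow]
          field_simp [h4eq]
          rw [h4eq]; ring
        calc r n * 2^n ≤ (1/2^n + 2*(n:ℝ)/4^n) * 2^n :=
              mul_le_mul_of_nonneg_right hhi.le h2n.le
          _ = 1 + 2 * ((n:ℝ) * (1/2:ℝ)^n) := e
    have t2 := kappa_tendsto κ hκ
    have hdiv : Tendsto (fun n : ℕ => (r n * 2^n) / (κ n * 2^n)) atTop (𝓝 1) := by
      have h := t1.div t2 one_ne_zero; rw [div_one] at h; exact h
    refine hdiv.congr' ?_
    filter_upwards [eventually_ge_atTop 1] with n hn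
    obtain ⟨⟨hκ0, _⟩, _⟩ := hκ n hn
    have h2n : (2:ℝ)^n ≠ 0 := by positivity
    field_simp
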